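/- For every Boolean function f ∈ B_{n,m}, the minimal k ≥ 0 for which there exists a function g ∈ B_{n,m+k} embedding f equals ℓ(f) = ⌈log₂ μ(f)⌉; that is, ℓ(f) is both an upper and a lower bound for the number of garbage outputs of an embedding of f. -/

import Mathlib

/-- `μ(f)`: the number of occurrences of the most frequent output pattern of
`f : 𝔹^n → 𝔹^m`. -/
def mu {n m : ℕ} (f : (Fin n → Bool) → (Fin m → Bool)) : ℕ :=
  Finset.univ.sup fun y : Fin m → Bool =>
    (Finset.univ.filter fun x : Fin n → Bool => f x = y).card

/-- `ℓ(f) = ⌈log₂ μ(f)⌉`. -/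
def ell {n m : ℕ} (f : (Fin n → Bool) → (Fin m → Bool)) : ℕ :=
  Nat.clog 2 (mu f)

/-- `g ∈ B_{n,m+k}` embeds `f ∈ B_{n,m}`: `g` is injective and the first `m`
output components of `g` agree with `f`. -/
def Embeds {n m k : ℕ} (g : (Fin n → Bool) → (Fin (m + k) → Bool))
    (f : (Fin n → Bool) → (Fin m → Bool)) : Prop :=
  Function.Injective g ∧ ∀ (x : Fin n → Bool) (i : Fin m), g x (Fin.castAdd k i) = f x i

theorem ell_isLeast_embedding
    (n m : ℕ) (f : (Fin n → Bool) → (Fin m → Bool)) :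
    IsLeast {k : ℕ | ∃ g : (Fin n → Bool) → (Fin (m + k) → Bool), Embeds g f}
      (ell f) := by
  constructor
  · -- membership: construct an embedding with k = ell f garbage bits
    set k := ell f with hk
    classical
    let e : (Fin n → Bool) → ℕ := fun z => (Fintype.equivFin _ z : ℕ)
    have e_inj : Function.Injective e := by
      intro a b hab
      exact (Fintype.equivFin _).injective (Fin.val_injective hab)
    let rank : (Fin n → Bool) → ℕ := fun x =>
      ((Finset.univ.filter fun z => f z = f x).filter fun z => e z < e x).card
    have rank_lt : ∀ x, rank x < 2 ^ k := by
      intro x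
      have h1 : rank x < (Finset.univ.filter fun z => f z = f x).card := by
        apply Finset.card_lt_card
        constructor
        · exact Finset.filter_subset _ _
        · intro hsub
          have hx : x ∈ Finset.univ.filter fun z => f z = f x := by simp
          have := hsub hx
          simp at this
      have h2 : (Finset.univ.filter fun z => f z = f x).card ≤ mu f :=
        Finset.le_sup (f := fun y : Fin m → Bool => (Finset.univ.filter fun x : Fin n → Bool => f x = y).card) (Finset.mem_univ (f x))
      have h3 : mu f ≤ 2 ^ k := Nat.le_pow_clog one_lt_two _
      omega
    have rank_inj : ∀ x₁ x₂, f x₁ = f x₂ → rank x₁ = rank x₂ → x₁ = x₂ := by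
      intro x₁ x₂ hf hr
      by_contra hne
      have hee : e x₁ ≠ e x₂ := fun h => hne (e_inj h)
      have key : ∀ a b : Fin n → Bool, f a = f b → e a < e b → rank a < rank b := by
        intro a b hab hlt
        apply Finset.card_lt_card
        constructor
        · intro z hz
          simp only [Finset.mem_filter, Finset.mem_univ, true_and] at hz ⊢
          exact ⟨hz.1.trans hab, hz.2.trans hlt⟩
        · intro hsub
          have ha : a ∈ (Finset.univ.filter fun z => f z = f b).filter fun z => e z < e b := by
            simp [hab, hlt]
          have := hsub ha
          simp at this
      rcases lt_or_gt_of_ne hee with h | h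
      · exact absurd hr (Nat.ne_of_lt (key _ _ hf h))
      · exact absurd hr.symm (Nat.ne_of_lt (key _ _ hf.symm h))
    let E : (Fin k → Bool) ≃ Fin (2 ^ k) :=
      (Equiv.arrowCongr (Equiv.refl _) finTwoEquiv.symm).trans finFunctionFinEquiv
    let g : (Fin n → Bool) → (Fin (m + k) → Bool) := fun x =>
      Fin.addCases (f x) (E.symm ⟨rank x, rank_lt x⟩)
    refine ⟨g, ?_, ?_⟩
    · intro x₁ x₂ h
      have hf : f x₁ = f x₂ := by
        funext i
        have := congrFun h (Fin.castAdd k i)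
        simpa [g, Fin.addCases_left] using this
      have hb : E.symm ⟨rank x₁, rank_lt x₁⟩ = E.symm ⟨rank x₂, rank_lt x₂⟩ := by
        funext i
        have := congrFun h (Fin.natAdd m i)
        simpa [g, Fin.addCases_right] using this
      have hr : rank x₁ = rank x₂ := congrArg Fin.val (E.symm.injective hb)
      exact rank_inj _ _ hf hr
    · intro x i
      simp [g, Fin.addCases_left]
  · -- lower bound
    rintro k ⟨g, hg_inj, hg⟩
    have hmu : mu f ≤ 2 ^ k := by
      apply Finset.sup_le
      intro y _
      have := Finset.card_le_card_of_injOn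
        (f := fun x : Fin n → Bool => fun i : Fin k => g x (Fin.natAdd m i))
        (s := Finset.univ.filter fun x => f x = y) (t := Finset.univ)
        (fun _ _ => Finset.mem_univ _) ?_
      · calc (Finset.univ.filter fun x => f x = y).card
            ≤ (Finset.univ : Finset (Fin k → Bool)).card := this
          _ = 2 ^ k := by
            rw [Finset.card_univ, Fintype.card_fun, Fintype.card_bool, Fintype.card_fin]
      · intro x₁ hx₁ x₂ hx₂ ht
        rw [Finset.mem_coe, Finset.mem_filter] at hx₁ hx₂
        replace hx₁ := hx₁.2; replace hx₂ := hx₂.2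
        apply hg_inj
        funext j
        refine Fin.addCases (fun i => ?_) (fun i => ?_) j
        · rw [hg x₁ i, hg x₂ i, hx₁, hx₂]
        · exact congrFun ht i
    exact (Nat.clog_le_iff_le_pow one_lt_two).mpr hmu
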